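/- Let n ≥ 2 and let q be a nonzero complex number. (i) Invariance: if u : ℂ → Mₙ(ℂ) takes lower unipotent values and L : ℂ → Mₙ(ℂ) takes values in M^s, then the function z ↦ u(qz)·L(z)·u(z)⁻¹ also takes values in M^s; that is, the q-gauge action of the lower unipotent loop group leaves the cell M^s invariant. (ii) Freeness: if moreover u(qz)·L(z)·u(z)⁻¹ = L(z) for all z ∈ ℂ, then u(z) is the identity matrix for all z ∈ ℂ; that is, the q-gauge action of the lower unipotent loop group on loops in M^s is free. -/
import Mathlib

/-- A matrix is lower unipotent if it is lower triangular with all diagonal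
entries equal to `1`. -/
def LowerUnipotent {n : ℕ} (A : Matrix (Fin n) (Fin n) ℂ) : Prop :=
  (∀ i, A i i = 1) ∧ ∀ i j : Fin n, (i : ℕ) < (j : ℕ) → A i j = 0

/-- `A ∈ Mˢ`: `det A = 1`, the superdiagonal entries equal `-1`, and all entries
above the superdiagonal vanish. -/
def InMs {n : ℕ} (A : Matrix (Fin n) (Fin n) ℂ) : Prop :=
  A.det = 1 ∧ (∀ i j : Fin n, (j : ℕ) = (i : ℕ) + 1 → A i j = -1) ∧
    ∀ i j : Fin n, (i : ℕ) + 1 < (j : ℕ) → A i j = 0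

private lemma lu_blockTri {n : ℕ} {A : Matrix (Fin n) (Fin n) ℂ} (h : LowerUnipotent A) :
    Matrix.BlockTriangular A OrderDual.toDual := by
  intro i j hij
  exact h.2 i j (by exact_mod_cast hij)

private lemma lu_det {n : ℕ} {A : Matrix (Fin n) (Fin n) ℂ} (h : LowerUnipotent A) :
    A.det = 1 := by
  rw [Matrix.det_of_lowerTriangular A (lu_blockTri h)]
  simp [h.1]

private lemma lu_inv {n : ℕ} {A : Matrix (Fin n) (Fin n) ℂ} (h : LowerUnipotent A) :
    LowerUnipotent A⁻¹ := by
  have hdet : IsUnit A.det := by rw [lu_det h]; exact isUnit_one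
  have : Invertible A := A.invertibleOfIsUnitDet hdet
  have htri : Matrix.BlockTriangular A⁻¹ OrderDual.toDual :=
    Matrix.blockTriangular_inv_of_blockTriangular (lu_blockTri h)
  have hlow : ∀ i j : Fin n, (i : ℕ) < (j : ℕ) → A⁻¹ i j = 0 := by
    intro i j hij
    exact htri (by exact_mod_cast hij)
  refine ⟨fun i => ?_, hlow⟩
  have h1 : (A⁻¹ * A) i i = 1 := by rw [A.nonsing_inv_mul hdet]; simp
  rw [Matrix.mul_apply] at h1
  rw [Finset.sum_eq_single i (fun k _ hk => ?_) (by simp)] at h1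
  · rw [h.1 i, mul_one] at h1; exact h1
  · rcases lt_or_gt_of_ne (fun hv : (k : ℕ) = (i : ℕ) => hk (Fin.ext hv)) with hlt | hgt
    · rw [h.2 k i hlt, mul_zero]
    · rw [hlow i k hgt, zero_mul]

/-- The q-gauge action of the lower unipotent loop group leaves the cell `Mˢ`
invariant, and acts freely on loops with values in `Mˢ`. -/
theorem q_gauge_invariance_and_freeness (n : ℕ) (hn : 2 ≤ n) (q : ℂ) (hq : q ≠ 0)
    (u L : ℂ → Matrix (Fin n) (Fin n) ℂ)
    (hu : ∀ z : ℂ, LowerUnipotent (u z)) (hL : ∀ z : ℂ, InMs (L z)) :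
    (∀ z : ℂ, InMs (u (q * z) * L z * (u z)⁻¹)) ∧
    ((∀ z : ℂ, u (q * z) * L z * (u z)⁻¹ = L z) →
      ∀ z : ℂ, u z = (1 : Matrix (Fin n) (Fin n) ℂ)) := by
  constructor
  · -- invariance
    intro z
    set U := u (q * z) with hU
    set V := (u z)⁻¹ with hV
    have hUu : LowerUnipotent U := hu _
    have hVu : LowerUnipotent V := lu_inv (hu z)
    have hLz := hL z
    -- entries of U * L z above the superdiagonal of the row index
    have hUL : ∀ i l : Fin n, (i : ℕ) + 1 < (l : ℕ) → (U * L z) i l = 0 := by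
      intro i l hil
      rw [Matrix.mul_apply]
      refine Finset.sum_eq_zero fun k _ => ?_
      by_cases hk : (k : ℕ) ≤ (i : ℕ)
      · rw [hLz.2.2 k l (by omega), mul_zero]
      · rw [hUu.2 i k (by omega), zero_mul]
    refine ⟨?_, fun i j hij => ?_, fun i j hij => ?_⟩
    · rw [Matrix.det_mul, Matrix.det_mul, lu_det hUu, hLz.1, Matrix.det_nonsing_inv,
        lu_det (hu z), Ring.inverse_one]
      ring
    · -- superdiagonal entry
      rw [Matrix.mul_apply]
      rw [Finset.sum_eq_single j (fun l _ hl => ?_) (by simp)]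
      · rw [hVu.1 j, mul_one, Matrix.mul_apply,
          Finset.sum_eq_single i (fun k _ hk => ?_) (by simp)]
        · rw [hUu.1 i, one_mul, hLz.2.1 i j hij]
        · by_cases hki : (k : ℕ) ≤ (i : ℕ)
          · have hki' : (k : ℕ) < (i : ℕ) := by
              rcases lt_or_eq_of_le hki with h' | h'
              · exact h'
              · exact absurd (Fin.ext h') hk
            rw [hLz.2.2 k j (by omega), mul_zero]
          · rw [hUu.2 i k (by omega), zero_mul]
      · rcases lt_or_gt_of_ne (fun hv : (l : ℕ) = (j : ℕ) => hl (Fin.ext hv)) with hlt | hgt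
        · rw [hVu.2 l j hlt, mul_zero]
        · rw [hUL i l (by omega), zero_mul]
    · -- entries above the superdiagonal
      rw [Matrix.mul_apply]
      refine Finset.sum_eq_zero fun l _ => ?_
      by_cases hl : (l : ℕ) < (j : ℕ)
      · rw [hVu.2 l j hl, mul_zero]
      · rw [hUL i l (by omega), zero_mul]
  · -- freeness
    intro hfix z
    have heq : ∀ w : ℂ, u (q * w) * L w = L w * u w := by
      intro w
      have hdet : IsUnit (u w).det := by rw [lu_det (hu w)]; exact isUnit_one
      calc u (q * w) * L w = u (q * w) * L w * (u w)⁻¹ * u w := by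
            rw [Matrix.mul_assoc (u (q * w) * L w), (u w).nonsing_inv_mul hdet, Matrix.mul_one]
        _ = L w * u w := by rw [hfix w]
    -- key entrywise equations
    have claimA : ∀ d : ℕ, (∀ e < d, ∀ (w : ℂ) (a b : Fin n), (a : ℕ) = (b : ℕ) + e + 1 → u w a b = 0) →
        ∀ (w' : ℂ) (a b c : Fin n), (a : ℕ) = (b : ℕ) + d + 1 → (c : ℕ) = (b : ℕ) + 1 →
        (∀ k : Fin n, (k : ℕ) = (a : ℕ) + 1 → u w' k c = 0) → u (q * w') a b = 0 := by
      intro d IHd w' a b c hab hcb hrow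
      have hent := congrFun (congrFun (heq w') a) c
      rw [Matrix.mul_apply, Matrix.mul_apply] at hent
      have hLHS : ∑ k, u (q * w') a k * L w' k c = u (q * w') a b * (-1) + L w' a c := by
        have hba : b ≠ a := by intro h; rw [h] at hab; omega
        rw [← Finset.sum_subset (Finset.subset_univ {b, a}) (fun k _ hk => ?_)]
        · rw [Finset.sum_pair hba, (hL w').2.1 b c (by omega),
            (hu (q*w')).1 a, one_mul]
        · simp only [Finset.mem_insert, Finset.mem_singleton, not_or] at hk
          obtain ⟨hkb, hka⟩ := hk
          by_cases h1 : (k : ℕ) < (b : ℕ)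
          · rw [(hL w').2.2 k c (by omega), mul_zero]
          by_cases h2 : (k : ℕ) ≤ (a : ℕ)
          · have hkb' : (b : ℕ) < (k : ℕ) := by
              rcases Nat.lt_or_ge (b : ℕ) (k : ℕ) with h | h
              · exact h
              · exact absurd (Fin.ext (by omega)) hkb
            have hka' : (k : ℕ) < (a : ℕ) := by
              rcases Nat.lt_or_ge (k : ℕ) (a : ℕ) with h | h
              · exact h
              · exact absurd (Fin.ext (by omega)) hka
            rw [IHd ((a : ℕ) - (k : ℕ) - 1) (by omega) _ a k (by omega), zero_mul]
          · rw [(hu (q*w')).2 a k (by omega), zero_mul]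
      have hRHS : ∑ k, L w' a k * u w' k c = L w' a c := by
        rw [Finset.sum_eq_single c (fun k _ hk => ?_) (by simp)]
        · rw [(hu w').1 c, mul_one]
        · by_cases h1 : (k : ℕ) < (c : ℕ)
          · rw [(hu w').2 k c h1, mul_zero]
          by_cases h2 : (k : ℕ) ≤ (a : ℕ)
          · have hkc : (c : ℕ) < (k : ℕ) := by
              rcases Nat.lt_or_ge (c : ℕ) (k : ℕ) with h | h
              · exact h
              · exact absurd (Fin.ext (by omega)) hk.symm
            rw [IHd ((k : ℕ) - (c : ℕ) - 1) (by omega) _ k c (by omega), mul_zero]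
          by_cases h3 : (k : ℕ) = (a : ℕ) + 1
          · rw [hrow k h3, mul_zero]
          · rw [(hL w').2.2 a k (by omega), zero_mul]
      rw [hLHS, hRHS] at hent
      have h0 : u (q * w') a b * (-1) = 0 := by linear_combination hent
      simpa using h0
    have key : ∀ d : ℕ, ∀ w : ℂ, ∀ a b : Fin n, (a : ℕ) = (b : ℕ) + d + 1 → u w a b = 0 := by
      intro d
      induction d using Nat.strong_induction_on with
      | _ d IHd =>
        suffices H : ∀ t : ℕ, ∀ w : ℂ, ∀ a b : Fin n,
            (a : ℕ) = (b : ℕ) + d + 1 → n - 1 - (a : ℕ) = t → u w a b = 0 by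
          intro w a b hab; exact H _ w a b hab rfl
        intro t
        induction t with
        | zero =>
          intro w a b hab hat
          have hc : (b : ℕ) + 1 < n := by have := a.isLt; omega
          have := claimA d (fun e he w'' a' b' h => IHd e he w'' a' b' h) (w / q) a b ⟨(b : ℕ) + 1, hc⟩
            hab rfl (fun k hk => by exfalso; have := k.isLt; have := a.isLt; omega)
          rwa [mul_div_cancel₀ w hq] at this
        | succ t IHt =>
          intro w a b hab hat
          have hc : (b : ℕ) + 1 < n := by have := a.isLt; omega
          have := claimA d (fun e he w'' a' b' h => IHd e he w'' a' b' h) (w / q) a b ⟨(b : ℕ) + 1, hc⟩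
            hab rfl (fun k hk => IHt (w / q) k ⟨(b : ℕ) + 1, hc⟩ (by simp; omega) (by omega))
          rwa [mul_div_cancel₀ w hq] at this
    ext i j
    rcases lt_trichotomy (i : ℕ) (j : ℕ) with h | h | h
    · rw [(hu z).2 i j h, Matrix.one_apply_ne (by intro hv; rw [hv] at h; omega)]
    · have : i = j := Fin.ext h
      rw [this, (hu z).1 j, Matrix.one_apply_eq]
    · rw [key ((i : ℕ) - (j : ℕ) - 1) z i j (by omega),
        Matrix.one_apply_ne (by intro hv; rw [hv] at h; omega)]
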